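/- Suppose a(ξ), b(ξ), c(ξ) ∈ ξ⁻¹·𝒜[ε][[ξ⁻¹]] satisfy ε∂(a(ξ)) = r·b(ξ) + q·c(ξ), ε∂(b(ξ)) + 2q·a(ξ) − 2ξ·b(ξ) + 2q = 0, and ε∂(c(ξ)) + 2r·a(ξ) + 2ξ·c(ξ) + 2r = 0 (identities in the Laurent ring 𝒜[ε][[ξ⁻¹]][ξ]). Then ∂(a(ξ)² + 2a(ξ) + b(ξ)c(ξ)) = 0. -/

import Mathlib

set_option synthInstance.maxHeartbeats 1000000
set_option maxHeartbeats 1000000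

noncomputable section

open scoped BigOperators

/-- Index set of the generators `qᵢ, rᵢ` of 𝒜. -/
inductive NLSVar : Type
  | q : ℕ → NLSVar
  | r : ℕ → NLSVar

/-- 𝒜 = ℂ[q₀, r₀, q₁, r₁, …]. -/
abbrev NLSA : Type := MvPolynomial NLSVar ℂ

/-- 𝒜[ε, ε⁻¹], as Laurent polynomials in ε over 𝒜. -/
abbrev NLSE : Type := LaurentPolynomial NLSA

instance : CommRing NLSE := inferInstance
instance : Algebra ℂ NLSE := inferInstance

/-- The generator qᵢ viewed in 𝒜[ε,ε⁻¹]. -/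
def qv (i : ℕ) : NLSE := LaurentPolynomial.C (MvPolynomial.X (NLSVar.q i))

/-- The generator rᵢ viewed in 𝒜[ε,ε⁻¹]. -/
def rv (i : ℕ) : NLSE := LaurentPolynomial.C (MvPolynomial.X (NLSVar.r i))

/-- ε ∈ 𝒜[ε,ε⁻¹]. -/
def eps : NLSE := LaurentPolynomial.T 1

/-- ε⁻¹ ∈ 𝒜[ε,ε⁻¹]. -/
def epsInv : NLSE := LaurentPolynomial.T (-1)

/-- Membership in the subring 𝒜[ε] ⊆ 𝒜[ε,ε⁻¹]: no negative powers of ε. -/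
def inAE (x : NLSE) : Prop := ∀ n : ℤ, n < 0 → (show ℤ →₀ NLSA from x.coeff) n = 0

/-- The Laurent-series ring 𝒜[ε,ε⁻¹][[ξ⁻¹]][ξ]; the Hahn-series exponent `n`
records the power of ξ⁻¹. -/
abbrev NLSL : Type := LaurentSeries NLSE

instance : CommRing NLSL := inferInstance
instance : Algebra ℂ NLSL := inferInstance

/-- ξ as a Laurent series in ξ⁻¹. -/
def xiL : NLSL := HahnSeries.single (-1 : ℤ) 1

/-- Apply a zero-preserving map to all coefficients of a Laurent series. -/
def coeffMap {R S : Type*} [Zero R] [Zero S] (f : ZeroHom R S)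
    (x : HahnSeries ℤ R) : HahnSeries ℤ S where
  coeff n := f (x.coeff n)
  isPWO_support' := x.isPWO_support'.mono (by
    intro n hn
    simp only [Function.mem_support, ne_eq] at hn ⊢
    exact fun h => hn (by rw [h, map_zero]))

/-- The derivation ∂, applied coefficientwise to a Laurent series in ξ⁻¹. -/
def dmap (d : Derivation ℂ NLSE NLSE) : NLSL → NLSL :=
  coeffMap ⟨fun x => d x, map_zero d⟩

/-- `∂` is the (unique) derivation of 𝒜[ε,ε⁻¹] with ∂(qᵢ)=qᵢ₊₁, ∂(rᵢ)=rᵢ₊₁, ∂(ε)=0. -/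
def IsDel (del : Derivation ℂ NLSE NLSE) : Prop :=
  (∀ i, del (qv i) = qv (i + 1)) ∧ (∀ i, del (rv i) = rv (i + 1)) ∧ del eps = 0

/-- The constant embedding 𝒜[ε,ε⁻¹] → 𝒜[ε,ε⁻¹][[ξ⁻¹]][ξ]. -/
def CL (x : NLSE) : NLSL := HahnSeries.C x

/-- The matrix U(ξ) = [[−ξ, −q],[r, ξ]]. -/
def Umat : Matrix (Fin 2) (Fin 2) NLSL :=
  !![-xiL, -(CL (qv 0)); CL (rv 0), xiL]

/-- The matrix [[2+a, b],[c, −a]]. -/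
def Rmat (a b c : NLSL) : Matrix (Fin 2) (Fin 2) NLSL := !![2 + a, b; c, -a]

/-- `a, b, c` are the entries of the (unique) basic matrix resolvent
R(ξ) = [[2+a(ξ), b(ξ)],[c(ξ), −a(ξ)]]. -/
def IsMR (del : Derivation ℂ NLSE NLSE) (a b c : NLSL) : Prop :=
  (∀ n : ℤ, n ≤ 0 → a.coeff n = 0) ∧
  (∀ n : ℤ, n ≤ 0 → b.coeff n = 0) ∧
  (∀ n : ℤ, n ≤ 0 → c.coeff n = 0) ∧
  (∀ n : ℤ, inAE (a.coeff n)) ∧ (∀ n : ℤ, inAE (b.coeff n)) ∧ (∀ n : ℤ, inAE (c.coeff n)) ∧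
  CL eps • (Rmat a b c).map (dmap del)
      + (Umat * Rmat a b c - Rmat a b c * Umat) = 0 ∧
  (Rmat a b c).det = 0

/-- A_j, the ξ^{−j−1}-coefficient of a(ξ). -/
def coA (a : NLSL) (j : ℕ) : NLSE := a.coeff (j + 1 : ℤ)

/-- The NLS derivations D_j: derivations of 𝒜[ε,ε⁻¹] commuting with ∂, annihilating ε,
with D_j(q) = 2^{j+1} ε⁻¹ B_{j+1} and D_j(r) = 2^{j+1} ε⁻¹ C_{j+1}. -/
def IsNLSD (del : Derivation ℂ NLSE NLSE) (b c : NLSL)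
    (D : ℕ → Derivation ℂ NLSE NLSE) : Prop :=
  (∀ j x, D j (del x) = del (D j x)) ∧
  (∀ j, D j eps = 0) ∧
  (∀ j, D j (qv 0) = (2 : NLSE) ^ (j + 1) * epsInv * coA b (j + 1)) ∧
  (∀ j, D j (rv 0) = (2 : NLSE) ^ (j + 1) * epsInv * coA c (j + 1))

end

noncomputable section

lemma dmap_coeff (d : Derivation ℂ NLSE NLSE) (x : NLSL) (n : ℤ) :
    (dmap d x).coeff n = d (x.coeff n) := rfl

lemma dmap_support (d : Derivation ℂ NLSE NLSE) (x : NLSL) :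
    (dmap d x).support ⊆ x.support := by
  intro n hn
  simp only [HahnSeries.mem_support, dmap_coeff, ne_eq] at hn ⊢
  exact fun h => hn (by rw [h, map_zero])

lemma dmap_add (d : Derivation ℂ NLSE NLSE) (x y : NLSL) :
    dmap d (x + y) = dmap d x + dmap d y := by
  refine HahnSeries.coeff_inj.mp (funext fun n => ?_)
  simp [dmap_coeff, HahnSeries.coeff_add]

lemma dmap_mul (d : Derivation ℂ NLSE NLSE) (x y : NLSL) :
    dmap d (x * y) = dmap d x * y + x * dmap d y := by
  refine HahnSeries.coeff_inj.mp (funext fun n => ?_)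
  rw [HahnSeries.coeff_add, dmap_coeff,
    HahnSeries.coeff_mul_left' x.isPWO_support (dmap_support d x),
    HahnSeries.coeff_mul_right' y.isPWO_support (dmap_support d y),
    HahnSeries.coeff_mul, map_sum]
  simp only [Derivation.leibniz, smul_eq_mul, dmap_coeff]
  trans ∑ ij ∈ Finset.addAntidiagonal x.isPWO_support y.isPWO_support n,
      (d (x.coeff ij.1) * y.coeff ij.2 + x.coeff ij.1 * d (y.coeff ij.2))
  · exact Finset.sum_congr rfl fun ij _ => by ring
  · exact Finset.sum_add_distrib

lemma CL_epsInv_eps : CL epsInv * CL eps = 1 := by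
  rw [show CL epsInv * CL eps = CL (epsInv * eps) from (map_mul HahnSeries.C _ _).symm]
  have : epsInv * eps = 1 := by
    rw [eps, epsInv, ← LaurentPolynomial.T_add, neg_add_cancel, LaurentPolynomial.T_zero]
  rw [this]
  exact map_one HahnSeries.C

/-- if a(ξ), b(ξ), c(ξ) ∈ ξ⁻¹𝒜[ε][[ξ⁻¹]] satisfy the three linear
equations, then ∂(a² + 2a + bc) = 0. -/
theorem nls_resolvent_first_integral
    (del : Derivation ℂ NLSE NLSE) (hdel : IsDel del)
    (a b c : NLSL)
    (ha0 : ∀ n : ℤ, n ≤ 0 → a.coeff n = 0)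
    (hb0 : ∀ n : ℤ, n ≤ 0 → b.coeff n = 0)
    (hc0 : ∀ n : ℤ, n ≤ 0 → c.coeff n = 0)
    (haE : ∀ n : ℤ, inAE (a.coeff n))
    (hbE : ∀ n : ℤ, inAE (b.coeff n))
    (hcE : ∀ n : ℤ, inAE (c.coeff n))
    (h1 : CL eps * dmap del a = CL (rv 0) * b + CL (qv 0) * c)
    (h2 : CL eps * dmap del b + 2 * CL (qv 0) * a - 2 * xiL * b + 2 * CL (qv 0) = 0)
    (h3 : CL eps * dmap del c + 2 * CL (rv 0) * a + 2 * xiL * c + 2 * CL (rv 0) = 0) :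
    dmap del (a * a + 2 * a + b * c) = 0 := by
  have key : CL eps * dmap del (a * a + 2 * a + b * c) = 0 := by
    rw [show (2 : NLSL) * a = a + a by ring]
    simp only [dmap_add, dmap_mul]
    linear_combination (2 * a + 2) * h1 + c * h2 + b * h3
  calc dmap del (a * a + 2 * a + b * c)
      = (CL epsInv * CL eps) * dmap del (a * a + 2 * a + b * c) := by
        rw [CL_epsInv_eps, one_mul]
    _ = CL epsInv * (CL eps * dmap del (a * a + 2 * a + b * c)) := by ring
    _ = 0 := by rw [key, mul_zero]

end
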